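/- Every tail-biting path (s, a) ∈ TBP(σᵢ) can be constructed from the irreducible error events in IEE(σᵢ) via concatenation and cyclic shifting: there exist 0 ≤ k < N and a finite sequence of elements of IEE(σᵢ) whose concatenation (joining paths at their common endpoint σᵢ) equals the cyclic shift of (s, a) by k. (Theorem 2 of the paper.) -/

import Mathlib

/-- A finite path through the trellis: a length `len`, a state sequence
`st 0, …, st len`, and an output sequence `out 0, …, out (len - 1)`. -/
structure NPath (S A : Type*) where
  len : ℕ
  st : ℕ → S
  out : ℕ → A

/-- Concatenation of a path ending at some state with a path starting at that
state: state sequences are joined (dropping the repeated initial state of the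
second path) and output sequences are appended. -/
def pconcat {S A : Type*} (p q : NPath S A) : NPath S A where
  len := p.len + q.len
  st := fun i => if i < p.len then p.st i else q.st (i - p.len)
  out := fun i => if i < p.len then p.out i else q.out (i - p.len)

/-- Concatenation of the nonempty sequence of paths `p :: l`. -/
def concatAll {S A : Type*} (p : NPath S A) (l : List (NPath S A)) : NPath S A :=
  l.foldl pconcat p

/-- Two paths are equal as paths: same length, same states `0, …, len`, and
same outputs `0, …, len - 1`. -/
def PathEq {S A : Type*} (p q : NPath S A) : Prop :=
  p.len = q.len ∧ (∀ i ≤ p.len, p.st i = q.st i) ∧ ∀ i < p.len, p.out i = q.out i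

/-- `(s, a)` satisfies the trellis transition constraint for `L` steps. -/
def IsTrellisPath {S A : Type*} (E : Set (S × A × S)) (L : ℕ)
    (s : ℕ → S) (a : ℕ → A) : Prop :=
  ∀ i < L, (s i, a i, s (i + 1)) ∈ E

/-- `(s, a)` is a tail-biting path of length `N`. -/
def IsTBPath {S A : Type*} (E : Set (S × A × S)) (N : ℕ)
    (s : ℕ → S) (a : ℕ → A) : Prop :=
  IsTrellisPath E N s a ∧ s 0 = s N

/-- Cyclic shift by `k` of the state sequence: `s'_i = s_{(i+k) mod N}`. -/
def cycShiftS {S : Type*} (N k : ℕ) (s : ℕ → S) : ℕ → S :=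
  fun i => s ((i + k) % N)

/-- Cyclic shift by `k` of the output sequence: `a'_i = a_{(i+k) mod N}`. -/
def cycShiftA {A : Type*} (N k : ℕ) (a : ℕ → A) : ℕ → A :=
  fun i => a ((i + k) % N)

/-- `(s, a)` belongs to `TBP(σᵢ)`: it is a tail-biting path of length `N` that
traverses `σᵢ` and avoids `σ_0, …, σ_{i-1}`. -/
def InTBP {S A : Type*} {M : ℕ} (E : Set (S × A × S)) (σ : Fin M → S) (i : Fin M)
    (N : ℕ) (s : ℕ → S) (a : ℕ → A) : Prop :=
  IsTBPath E N s a ∧ (∃ j ≤ N, s j = σ i) ∧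
    ∀ j ≤ N, ∀ i' : Fin M, i' < i → s j ≠ σ i'

/-- `p` is an irreducible error event at `σᵢ` (of some length `1 ≤ j ≤ N`): it
satisfies the trellis constraint, starts and ends at `σᵢ`, and its interior
states avoid `σ_0, σ_1, …, σᵢ`. -/
def InIEE {S A : Type*} {M : ℕ} (E : Set (S × A × S)) (σ : Fin M → S) (i : Fin M)
    (N : ℕ) (p : NPath S A) : Prop :=
  1 ≤ p.len ∧ p.len ≤ N ∧
    (∀ l < p.len, (p.st l, p.out l, p.st (l + 1)) ∈ E) ∧
    p.st 0 = σ i ∧ p.st p.len = σ i ∧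
    ∀ j', 0 < j' → j' < p.len → ∀ i' : Fin M, i' ≤ i → p.st j' ≠ σ i'

lemma pconcat_assoc {S A : Type*} (a b c : NPath S A) :
    pconcat (pconcat a b) c = pconcat a (pconcat b c) := by
  simp only [pconcat, NPath.mk.injEq]
  refine ⟨Nat.add_assoc _ _ _, ?_, ?_⟩ <;>
  · funext x
    by_cases h1 : x < a.len + b.len <;> by_cases h2 : x < a.len <;>
      by_cases h3 : x - a.len < b.len <;> simp only [h1, h2, h3, if_true, if_false] <;> first
      | rfl
      | omega
      | (congr 1; omega)

lemma concatAll_cons {S A : Type*} (p q : NPath S A) (l : List (NPath S A)) :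
    concatAll p (q :: l) = pconcat p (concatAll q l) := by
  induction l generalizing p q with
  | nil => rfl
  | cons r l ih =>
    show concatAll (pconcat p q) (r :: l) = _
    rw [ih, ih, pconcat_assoc]

lemma pathEq_trans {S A : Type*} {p q r : NPath S A}
    (h1 : PathEq p q) (h2 : PathEq q r) : PathEq p r := by
  obtain ⟨hl1, hs1, ho1⟩ := h1
  obtain ⟨hl2, hs2, ho2⟩ := h2
  exact ⟨hl1.trans hl2, fun i hi => (hs1 i hi).trans (hs2 i (hl1 ▸ hi)),
    fun i hi => (ho1 i hi).trans (ho2 i (hl1 ▸ hi))⟩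

lemma pathEq_pconcat_right {S A : Type*} (p : NPath S A) {q q' : NPath S A}
    (h : PathEq q q') : PathEq (pconcat p q) (pconcat p q') := by
  obtain ⟨hl, hs, ho⟩ := h
  refine ⟨by simp [pconcat, hl], ?_, ?_⟩ <;>
  · intro x hx
    simp only [pconcat] at hx ⊢
    split_ifs with hxp
    · rfl
    · first
        | exact hs _ (by omega)
        | exact ho _ (by omega)

lemma decomp_iee {S A : Type*} {M : ℕ} (E : Set (S × A × S)) (σ : Fin M → S)
    (i : Fin M) (N : ℕ) :
    ∀ n, 1 ≤ n → n ≤ N → ∀ (s : ℕ → S) (a : ℕ → A),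
      (∀ l < n, (s l, a l, s (l + 1)) ∈ E) →
      s 0 = σ i → s n = σ i →
      (∀ j ≤ n, ∀ i' : Fin M, i' < i → s j ≠ σ i') →
      ∃ p l, (∀ q ∈ p :: l, InIEE E σ i N q) ∧
        PathEq (concatAll p l) ⟨n, s, a⟩ := by
  intro n
  induction n using Nat.strong_induction_on with
  | _ n ih =>
  intro hn hnN s a htr h0 hend havoid
  classical
  have hex : ∃ m, 0 < m ∧ m ≤ n ∧ s m = σ i := ⟨n, by omega, le_refl n, hend⟩
  obtain ⟨htpos, htn, hts⟩ := Nat.find_spec hex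
  set t := Nat.find hex with ht
  have hmin : ∀ m, 0 < m → m < t → s m ≠ σ i := by
    intro m hm hmt hcon
    exact Nat.find_min hex hmt ⟨hm, le_trans hmt.le htn, hcon⟩
  have hp0 : InIEE E σ i N ⟨t, s, a⟩ := by
    refine ⟨htpos, htn.trans hnN, fun l hl => htr l (lt_of_lt_of_le hl htn),
      h0, hts, ?_⟩
    intro j' hj0 hjt i' hi'
    rcases lt_or_eq_of_le hi' with hlt | heq
    · exact havoid j' (le_trans (Nat.le_of_lt hjt) htn) i' hlt
    · exact heq ▸ hmin j' hj0 hjt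
  rcases eq_or_lt_of_le htn with heq | hlt
  · refine ⟨⟨t, s, a⟩, [], ?_, ?_⟩
    · intro q hq; simp at hq; subst hq; exact hp0
    · exact ⟨heq, fun _ _ => rfl, fun _ _ => rfl⟩
  · obtain ⟨p, l, hall, heq⟩ := ih (n - t) (by omega) (by omega) (by omega)
      (fun j => s (t + j)) (fun j => a (t + j))
      (fun l hl => htr (t + l) (by omega))
      hts
      (by show s (t + (n - t)) = σ i; rw [show t + (n - t) = n by omega]; exact hend)
      (fun j hj i' hi' => havoid (t + j) (by omega) i' hi')
    refine ⟨⟨t, s, a⟩, p :: l, ?_, ?_⟩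
    · intro q hq
      rcases List.mem_cons.mp hq with hq | hq
      · subst hq; exact hp0
      · exact hall q hq
    · rw [concatAll_cons]
      refine pathEq_trans (pathEq_pconcat_right _ heq) ?_
      refine ⟨by simp [pconcat]; omega, ?_, ?_⟩ <;>
      · intro x hx
        simp only [pconcat] at hx ⊢
        split_ifs with hxt
        · rfl
        · show _ = _
          first
            | (show s (t + (x - t)) = s x; congr 1; omega)
            | (show a (t + (x - t)) = a x; congr 1; omega)

/-- Theorem 2: every tail-biting path in `TBP(σᵢ)` can be constructed from the
irreducible error events in `IEE(σᵢ)` via concatenation and cyclic shifting: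
there exist `0 ≤ k < N` and a finite nonempty sequence of elements of `IEE(σᵢ)`
whose concatenation equals the cyclic shift of `(s, a)` by `k`. -/
theorem tbp_eq_concat_of_iee {S A : Type*} {M : ℕ}
    (E : Set (S × A × S)) (σ : Fin M → S) (i : Fin M)
    (N : ℕ) (hN : 1 ≤ N) (s : ℕ → S) (a : ℕ → A)
    (h : InTBP E σ i N s a) :
    ∃ k < N, ∃ (p : NPath S A) (l : List (NPath S A)),
      (∀ q ∈ p :: l, InIEE E σ i N q) ∧
      PathEq (concatAll p l) ⟨N, cycShiftS N k s, cycShiftA N k a⟩ := by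
  obtain ⟨⟨htr, hcyc⟩, ⟨j, hj, hsj⟩, havoid⟩ := h
  set k := j % N with hk
  have hkN : k < N := Nat.mod_lt _ (by omega)
  have hsk : s k = σ i := by
    rcases lt_or_eq_of_le hj with hjN | hjN
    · rwa [hk, Nat.mod_eq_of_lt hjN]
    · rw [hk, hjN, Nat.mod_self]; rw [hcyc, ← hjN]; exact hsj
  refine ⟨k, hkN, ?_⟩
  set s' : ℕ → S := cycShiftS N k s with hs'
  set a' : ℕ → A := cycShiftA N k a with ha'
  have key : ∀ l : ℕ, s' (l + 1) = s ((l + k) % N + 1) := by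
    intro l
    have hm : (l + k) % N < N := Nat.mod_lt _ (by omega)
    have hdm : l + k = N * ((l + k) / N) + (l + k) % N := (Nat.div_add_mod _ _).symm
    show s ((l + 1 + k) % N) = _
    have h1 : l + 1 + k = N * ((l + k) / N) + ((l + k) % N + 1) := by omega
    rw [h1, Nat.mul_add_mod]
    rcases lt_or_eq_of_le (Nat.succ_le_of_lt hm) with h2 | h2
    · rw [Nat.mod_eq_of_lt h2]
    · have h2' : (l + k) % N + 1 = N := by omega
      rw [h2', Nat.mod_self, hcyc]
  have := decomp_iee E σ i N N hN (le_refl N) s' a'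
    (by
      intro l hl
      have hm : (l + k) % N < N := Nat.mod_lt _ (by omega)
      have := htr ((l + k) % N) hm
      rw [key l]
      exact this)
    (by show s ((0 + k) % N) = σ i; rw [Nat.zero_add, Nat.mod_eq_of_lt hkN]; exact hsk)
    (by show s ((N + k) % N) = σ i; rw [Nat.add_mod_left, Nat.mod_eq_of_lt hkN]; exact hsk)
    (by
      intro j' _ i' hi'
      show s ((j' + k) % N) ≠ σ i'
      exact havoid _ (le_of_lt (Nat.mod_lt _ (by omega))) i' hi')
  exact this
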